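/- Let G be a finite group and M a non-normal maximal subgroup of G of rank r (the number of orbits of M on the right cosets of M in G, equivalently the number of double cosets of M). Then G is a setwise product of r+1 conjugates of M; in particular γ_cp(G) ≤ r+1. -/

import Mathlib

open Pointwise

/-- The conjugate subgroup `A ^ g = g⁻¹ A g`. -/
def conjugate {G : Type*} [Group G] (A : Subgroup G) (g : G) : Subgroup G :=
  Subgroup.map (MulAut.conj g⁻¹).toMonoidHom A

/-- `G` is a product, in some order, of `k` pairwise conjugate proper subgroups. -/
def IsConjProdCover {G : Type*} [Group G] (k : ℕ) : Prop :=
  ∃ l : List (Subgroup G), l.length = k ∧ 2 ≤ l.length ∧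
    (∀ A ∈ l, A ≠ ⊤) ∧ (∀ A ∈ l, ∀ B ∈ l, ∃ g : G, B = conjugate A g) ∧
    (l.map (fun A => (A : Set G))).prod = Set.univ

/-- `γ_cp(G)`. -/
noncomputable def gammaCP (G : Type*) [Group G] : ℕ∞ :=
  sInf {k : ℕ∞ | ∃ n : ℕ, k = (n : ℕ∞) ∧ IsConjProdCover (G := G) n}

section Aux

variable {G : Type*} [Group G]

lemma map_coe_eq (l : List (Subgroup G)) :
    (l.map (fun A => (A : Set G))) = l.map SetLike.coe := by
  have key : ∀ m : List (Subgroup G),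
      (m.flatMap fun a => [(a : Set G)]) = List.map SetLike.coe m := by
    intro m
    induction m with
    | nil => rfl
    | cons a t ih => simp_all
  simp [key]
  induction l <;> simp_all

lemma mem_conjugate {A : Subgroup G} {g x : G} :
    x ∈ conjugate A g ↔ g * x * g⁻¹ ∈ A := by
  constructor
  · rintro ⟨m, hm, rfl⟩
    simp only [MulEquiv.toMonoidHom_eq_coe, MonoidHom.coe_coe, MulAut.conj_apply, inv_inv]
    convert hm using 1
    group
    exact Iff.rfl
  · intro h
    refine ⟨g * x * g⁻¹, h, ?_⟩
    simp only [MulEquiv.toMonoidHom_eq_coe, MonoidHom.coe_coe, MulAut.conj_apply, inv_inv]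
    group

lemma conjugate_one (A : Subgroup G) : conjugate A 1 = A := by
  ext x; simp [mem_conjugate]

lemma conjugate_conjugate (A : Subgroup G) (g h : G) :
    conjugate (conjugate A g) h = conjugate A (g * h) := by
  ext x
  rw [mem_conjugate, mem_conjugate, mem_conjugate]
  have e : g * (h * x * h⁻¹) * g⁻¹ = g * h * x * (g * h)⁻¹ := by group
  rw [e]

lemma conjugate_ne_top {A : Subgroup G} (hA : A ≠ ⊤) (g : G) : conjugate A g ≠ ⊤ := by
  intro h
  apply hA
  rw [Subgroup.eq_top_iff']
  intro x
  have h2 := (Subgroup.eq_top_iff' _).1 h (g⁻¹ * x * g)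
  rw [mem_conjugate] at h2
  convert h2 using 1
  group

lemma subgroup_mul_self (M : Subgroup G) : (M : Set G) * (M : Set G) = (M : Set G) := by
  ext x
  constructor
  · rintro ⟨a, ha, b, hb, rfl⟩
    exact mul_mem ha hb
  · intro hx
    exact ⟨x, hx, 1, one_mem M, mul_one x⟩

variable [Finite G] {M : Subgroup G}

/-- Key growth lemma: if the product set `R * M` is not everything, some conjugate of `M`
can be inserted to make it strictly bigger. -/
lemma growth (hmax : IsCoatom M) (hnn : ¬ M.Normal) {R : Set G} (h1 : (1 : G) ∈ R)
    (hQ : R * (M : Set G) ≠ Set.univ) :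
    ∃ h : G, R * (M : Set G) ⊂ R * (conjugate M h : Set G) * (M : Set G) := by
  by_contra hcon
  push_neg at hcon
  set Q : Set G := R * (M : Set G) with hQdef
  have hsub : ∀ h : G, Q ⊆ R * (conjugate M h : Set G) * (M : Set G) := by
    intro h x hx
    obtain ⟨a, ha, b, hb, rfl⟩ := hx
    exact ⟨a * 1, ⟨a, ha, 1, one_mem _, rfl⟩, b, hb, by simp⟩
  have hle : ∀ h : G, R * (conjugate M h : Set G) * (M : Set G) ⊆ Q := by
    intro h
    by_contra hlt
    exact hcon h ⟨hsub h, fun hsup => hlt hsup⟩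
  -- Step 1 : Q is stable under right multiplication by any conjugate of M
  have step1 : ∀ y : G, ∀ m' ∈ M, ∀ q ∈ Q, q * (y⁻¹ * m' * y) ∈ Q := by
    intro y m' hm' q hq
    obtain ⟨a, ha, b, hb, rfl⟩ := hq
    have hmem : (y * b⁻¹)⁻¹ * m' * (y * b⁻¹) ∈ conjugate M (y * b⁻¹) := by
      rw [mem_conjugate]
      have e : y * b⁻¹ * ((y * b⁻¹)⁻¹ * m' * (y * b⁻¹)) * (y * b⁻¹)⁻¹ = m' := by group
      rw [e]
      exact hm'
    have key : a * ((y * b⁻¹)⁻¹ * m' * (y * b⁻¹)) * b ∈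
        R * (conjugate M (y * b⁻¹) : Set G) * (M : Set G) :=
      ⟨a * ((y * b⁻¹)⁻¹ * m' * (y * b⁻¹)), ⟨a, ha, _, hmem, rfl⟩, b, hb, rfl⟩
    have heq : a * b * (y⁻¹ * m' * y) = a * ((y * b⁻¹)⁻¹ * m' * (y * b⁻¹)) * b := by
      group
    rw [heq]
    exact hle _ key
  have hQfin : Q.Finite := Set.toFinite Q
  have inv_aux : ∀ g : G, (∀ q ∈ Q, q * g ∈ Q) → ∀ q ∈ Q, q * g⁻¹ ∈ Q := by
    intro g hg q hq
    have himg : Q * {g} ⊆ Q := by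
      rintro _ ⟨a, ha, b, (rfl : b = g), rfl⟩
      exact hg a ha
    have hcard : Q.ncard ≤ (Q * {g}).ncard := by
      rw [Set.mul_singleton, Set.ncard_image_of_injective _ (mul_left_injective g)]
    have heq : Q * {g} = Q := Set.eq_of_subset_of_ncard_le himg hcard hQfin
    have hq2 : q ∈ Q * {g} := heq.symm ▸ hq
    obtain ⟨a, ha, b, (rfl : b = g), rfl⟩ := hq2
    simpa using ha
  let T : Subgroup G :=
    { carrier := {g : G | ∀ q ∈ Q, q * g ∈ Q}
      one_mem' := by intro q hq; simpa using hq
      mul_mem' := by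
        intro a b ha hb q hq
        rw [← mul_assoc]
        exact hb _ (ha _ hq)
      inv_mem' := by
        intro a ha
        exact inv_aux a ha }
  have hMT : M ≤ T := by
    intro m hm q hq
    obtain ⟨a, ha, b, hb, rfl⟩ := hq
    exact ⟨a, ha, b * m, mul_mem hb hm, (mul_assoc a b m).symm⟩
  have hTtop : T = ⊤ := by
    rcases eq_or_ne T ⊤ with h | h
    · exact h
    exfalso
    have hTM : T = M := by
      by_contra hne
      exact h (hmax.2 T (lt_of_le_of_ne hMT (fun hh => hne hh.symm)))
    apply hnn
    constructor
    intro n hn g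
    have hT : (g⁻¹)⁻¹ * n * g⁻¹ ∈ T := fun q hq => step1 g⁻¹ n hn q hq
    rw [hTM] at hT
    simpa using hT
  apply hQ
  apply Set.eq_univ_of_forall
  intro g
  have hg : g ∈ T := hTtop ▸ Subgroup.mem_top g
  have h1Q : (1 : G) ∈ Q := ⟨1, h1, 1, one_mem M, by simp⟩
  simpa using hg 1 h1Q

end Aux

theorem stmt_9 {G : Type*} [Group G] [Finite G] (M : Subgroup G)
    (hmax : IsCoatom M) (hnn : ¬ M.Normal)
    (r : ℕ) (hr : r = Nat.card (DoubleCoset.Quotient (M : Set G) (M : Set G))) :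
    (∃ l : List (Subgroup G), l.length = r + 1 ∧
        (∀ A ∈ l, ∃ g : G, A = conjugate M g) ∧
        (l.map (fun A => (A : Set G))).prod = Set.univ) ∧
      gammaCP G ≤ (r + 1 : ℕ) := by
  classical
  have hfinQ : Finite (DoubleCoset.Quotient (M : Set G) (M : Set G)) :=
    Quotient.finite (DoubleCoset.setoid (M : Set G) (M : Set G))
  set ψ : Set G → Set (DoubleCoset.Quotient (M : Set G) (M : Set G)) :=
    fun S => DoubleCoset.mk M M '' S with hψ
  -- saturation : a set stable under left and right M-multiplication is doset-saturated
  have sat : ∀ S : Set G, (M : Set G) * S = S → S * (M : Set G) = S →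
      ∀ x y : G, y ∈ S → DoubleCoset.mk M M x = DoubleCoset.mk M M y → x ∈ S := by
    intro S hl hrS x y hy hxy
    obtain ⟨h, hh, k, hk, hyx⟩ := (DoubleCoset.eq M M x y).1 hxy
    have hx : x = h⁻¹ * (y * k⁻¹) := by rw [hyx]; group
    have h2 : y * k⁻¹ ∈ S := by
      rw [← hrS]
      exact ⟨y, hy, k⁻¹, inv_mem hk, rfl⟩
    have h3 : x ∈ (M : Set G) * S := ⟨h⁻¹, inv_mem hh, y * k⁻¹, h2, hx.symm⟩
    rwa [hl] at h3
  have hrpos : 1 ≤ r := by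
    rw [hr]
    have hne : Nonempty (DoubleCoset.Quotient (M : Set G) (M : Set G)) := ⟨DoubleCoset.mk M M 1⟩
    exact Nat.one_le_iff_ne_zero.2 (Nat.card_ne_zero.2 ⟨hne, hfinQ⟩)
  -- main induction
  have main : ∀ k : ℕ, ∃ l : List (Subgroup G), l.length = k + 1 ∧
      (∀ A ∈ l, ∃ g : G, A = conjugate M g) ∧
      (1 : G) ∈ (l.map SetLike.coe).prod ∧
      (M : Set G) * (l.map SetLike.coe).prod = (l.map SetLike.coe).prod ∧
      ((l.map SetLike.coe).prod * (M : Set G) = Set.univ ∨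
        k + 1 ≤ (ψ ((l.map SetLike.coe).prod * (M : Set G))).ncard) := by
    intro k
    induction k with
    | zero =>
      refine ⟨[M], rfl, ?_, ?_, ?_, ?_⟩
      · intro A hA
        rw [List.mem_singleton] at hA
        exact ⟨1, by rw [hA, conjugate_one]⟩
      · simp only [List.map_cons, List.map_nil, List.prod_cons, List.prod_nil, mul_one]
        exact one_mem M
      · simp only [List.map_cons, List.map_nil, List.prod_cons, List.prod_nil, mul_one]
        exact subgroup_mul_self M
      · right
        simp only [List.map_cons, List.map_nil, List.prod_cons, List.prod_nil, mul_one]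
        rw [subgroup_mul_self M]
        have hne : (ψ (M : Set G)).Nonempty := ⟨DoubleCoset.mk M M 1, 1, one_mem M, rfl⟩
        have hpos := (Set.ncard_pos (Set.toFinite _)).2 hne
        omega
    | succ n ih =>
      obtain ⟨l, hlen, hconj, h1, hMl, hor⟩ := ih
      by_cases huniv : (l.map SetLike.coe).prod * (M : Set G) = Set.univ
      · -- already everything : prepend M (product unchanged)
        refine ⟨M :: l, by simp [hlen], ?_, ?_, ?_, ?_⟩
        · intro A hA
          rcases List.mem_cons.1 hA with h | h
          · exact ⟨1, by rw [h, conjugate_one]⟩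
          · exact hconj A h
        · simp only [List.map_cons, List.prod_cons]
          rw [hMl]
          exact h1
        · simp only [List.map_cons, List.prod_cons]
          rw [← mul_assoc, subgroup_mul_self M]
        · left
          simp only [List.map_cons, List.prod_cons]
          rw [hMl]
          exact huniv
      · have hcard : n + 1 ≤ (ψ ((l.map SetLike.coe).prod * (M : Set G))).ncard := by
          rcases hor with h | h
          · exact absurd h huniv
          · exact h
        obtain ⟨h, hgrow⟩ := growth hmax hnn h1 huniv
        set P : Set G := (l.map SetLike.coe).prod with hP
        refine ⟨l ++ [conjugate M h], by simp [hlen], ?_, ?_, ?_, ?_⟩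
        · intro A hA
          rcases List.mem_append.1 hA with h' | h'
          · exact hconj A h'
          · rw [List.mem_singleton] at h'
            exact ⟨h, h'⟩
        · rw [List.map_append, List.prod_append]
          simp only [List.map_cons, List.map_nil, List.prod_cons, List.prod_nil, mul_one]
          exact ⟨1, h1, 1, one_mem _, by simp⟩
        · rw [List.map_append, List.prod_append]
          simp only [List.map_cons, List.map_nil, List.prod_cons, List.prod_nil, mul_one]
          rw [← mul_assoc, hMl]
        · right
          rw [List.map_append, List.prod_append]
          simp only [List.map_cons, List.map_nil, List.prod_cons, List.prod_nil, mul_one]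
          -- ψ (P * M) ⊊ ψ (P * C * M)
          have hmono : ψ (P * (M : Set G)) ⊆ ψ (P * (conjugate M h : Set G) * (M : Set G)) :=
            Set.image_mono hgrow.1
          have hstrict : ψ (P * (M : Set G)) ≠ ψ (P * (conjugate M h : Set G) * (M : Set G)) := by
            intro heq
            obtain ⟨x, hx, hxn⟩ := Set.exists_of_ssubset hgrow
            have hmem : DoubleCoset.mk M M x ∈ ψ (P * (M : Set G)) := by
              rw [heq]; exact ⟨x, hx, rfl⟩
            obtain ⟨y, hy, hyx⟩ := hmem
            have hPMl : (M : Set G) * (P * (M : Set G)) = P * (M : Set G) := by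
              rw [← mul_assoc, hMl]
            have hPMr : (P * (M : Set G)) * (M : Set G) = P * (M : Set G) := by
              rw [mul_assoc, subgroup_mul_self M]
            exact hxn (sat _ hPMl hPMr x y hy hyx.symm)
          have hlt : (ψ (P * (M : Set G))).ncard <
              (ψ (P * (conjugate M h : Set G) * (M : Set G))).ncard :=
            Set.ncard_lt_ncard ⟨hmono, fun hsup => hstrict (le_antisymm hmono hsup)⟩
              (Set.toFinite _)
          exact Nat.succ_le_of_lt (Nat.lt_of_le_of_lt hcard hlt)
  -- conclude : a list of length r whose product times M is univ
  obtain ⟨l, hlen, hconj, h1, hMl, hor⟩ := main (r - 1)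
  have hlenr : l.length = r := by omega
  set P : Set G := (l.map SetLike.coe).prod with hP
  have hPM : P * (M : Set G) = Set.univ := by
    rcases hor with huniv | hcard
    · exact huniv
    · have hcard' : r ≤ (ψ (P * (M : Set G))).ncard := by omega
      have hall : ψ (P * (M : Set G)) = Set.univ := by
        apply Set.eq_of_subset_of_ncard_le (Set.subset_univ _)
        rw [Set.ncard_univ, ← hr]
        exact hcard'
      apply Set.eq_univ_of_forall
      intro x
      have hx : DoubleCoset.mk M M x ∈ ψ (P * (M : Set G)) := by rw [hall]; trivial
      obtain ⟨y, hy, hyx⟩ := hx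
      have hPMl : (M : Set G) * (P * (M : Set G)) = P * (M : Set G) := by
        rw [← mul_assoc, hMl]
      have hPMr : (P * (M : Set G)) * (M : Set G) = P * (M : Set G) := by
        rw [mul_assoc, subgroup_mul_self M]
      exact sat _ hPMl hPMr x y hy hyx.symm
  -- final list
  set L : List (Subgroup G) := l ++ [M] with hL
  have hLlen : L.length = r + 1 := by simp [hL, hlenr]
  have hLconj : ∀ A ∈ L, ∃ g : G, A = conjugate M g := by
    intro A hA
    rcases List.mem_append.1 hA with h' | h'
    · exact hconj A h'
    · rw [List.mem_singleton] at h'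
      exact ⟨1, by rw [h', conjugate_one]⟩
  have hLprod : (L.map (fun A => (A : Set G))).prod = Set.univ := by
    rw [map_coe_eq, hL, List.map_append, List.prod_append]
    simp only [List.map_cons, List.map_nil, List.prod_cons, List.prod_nil, mul_one]
    exact hPM
  constructor
  · exact ⟨L, hLlen, hLconj, hLprod⟩
  · have hcover : IsConjProdCover (G := G) (r + 1) := by
      refine ⟨L, hLlen, by omega, ?_, ?_, hLprod⟩
      · intro A hA
        obtain ⟨g, rfl⟩ := hLconj A hA
        exact conjugate_ne_top hmax.1 g
      · intro A hA B hB
        obtain ⟨g, rfl⟩ := hLconj A hA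
        obtain ⟨g', rfl⟩ := hLconj B hB
        exact ⟨g⁻¹ * g', by rw [conjugate_conjugate, mul_inv_cancel_left]⟩
    have hmem : ((r + 1 : ℕ) : ℕ∞) ∈
        {k : ℕ∞ | ∃ n : ℕ, k = (n : ℕ∞) ∧ IsConjProdCover (G := G) n} :=
      ⟨r + 1, rfl, hcover⟩
    exact sInf_le hmem
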